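/- Let S be a nonempty finite set of states, A a metric space of actions, P : S × A × S → ℝ with |P(s'|s,a₁) − P(s'|s,a₂)| ≤ K_P·dist(a₁,a₂), R : S × A → ℝ with |R(s,a₁) − R(s,a₂)| ≤ K_R·dist(a₁,a₂), γ ∈ [0,1), and Q : S × A → ℝ with |Q(s,a)| ≤ Q_max and |Q(s,a₁) − Q(s,a₂)| ≤ K_Q·dist(a₁,a₂) for all arguments. Let u assign to each state a nonempty finite subset of A, and define (T_u Q)(s,a) = R(s,a) + γ ∑_{s'} P(s'|s,a)·max_{a'∈u(s')} Q(s',a'). Let H be a real inner product space and g : A → H satisfy ‖g(a₁) − g(a₂)‖ ≤ K_g·dist(a₁,a₂) (K_g > 0) and ‖g(a')‖ ≤ g_max for all a'. Fix s ∈ S and actions ã ≠ a with K_g·dist(ã,a) ≤ ‖g(a)‖, and fix a learning rate α with 0 ≤ α ≤ 1/g_max². Then there exist constants C₁ ∈ [0,1] and C₂ with |C₂| ≤ K_Q + K_R + γ·K_P·|S|·Q_max such that α·⟨g(ã), g(a)⟩·((T_u Q)(s,a) − Q(s,a)) = C₁·((T_u Q)(s,ã) − Q(s,ã) + C₂·dist(ã,a)).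 -/

import Mathlib

/-- Generalization effect of one TD gradient step (Theorem 1 / Theorem A.6): the first-order
change of `Q` at the out-of-dataset pair `(s,ã)` equals
`C₁·((T_u Q)(s,ã) − Q(s,ã) + C₂·dist(ã,a))` with `C₁ ∈ [0,1]` and
`|C₂| ≤ K_Q + K_R + γ·K_P·|S|·Q_max`. -/
theorem td_step_generalization_effect
    {S A H : Type*} [Fintype S] [Nonempty S] [MetricSpace A]
    [NormedAddCommGroup H] [InnerProductSpace ℝ H]
    (P : S → A → S → ℝ) (R : S → A → ℝ) (γ K_P K_R K_Q Q_max : ℝ)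
    (hγ0 : 0 ≤ γ) (hγ1 : γ < 1)
    (hP : ∀ s s' a₁ a₂, |P s a₁ s' - P s a₂ s'| ≤ K_P * dist a₁ a₂)
    (hR : ∀ s a₁ a₂, |R s a₁ - R s a₂| ≤ K_R * dist a₁ a₂)
    (Q : S → A → ℝ) (hQbdd : ∀ s a, |Q s a| ≤ Q_max)
    (hQlip : ∀ s a₁ a₂, |Q s a₁ - Q s a₂| ≤ K_Q * dist a₁ a₂)
    (u : S → Finset A) (hu : ∀ s, (u s).Nonempty)
    (TQ : S → A → ℝ)
    (hTQ : ∀ s a, TQ s a =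
      R s a + γ * ∑ s' : S, P s a s' * (u s').sup' (hu s') (fun a' => Q s' a'))
    (g : A → H) (K_g g_max : ℝ) (hKg : 0 < K_g)
    (hg : ∀ a₁ a₂, ‖g a₁ - g a₂‖ ≤ K_g * dist a₁ a₂)
    (hgbdd : ∀ a' : A, ‖g a'‖ ≤ g_max)
    (s : S) (atil a : A) (hne : atil ≠ a)
    (hclose : K_g * dist atil a ≤ ‖g a‖)
    (α : ℝ) (hα0 : 0 ≤ α) (hα1 : α ≤ 1 / g_max ^ 2) :
    ∃ C₁ C₂ : ℝ, C₁ ∈ Set.Icc (0 : ℝ) 1 ∧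
      |C₂| ≤ K_Q + K_R + γ * K_P * (Fintype.card S : ℝ) * Q_max ∧
      α * (inner ℝ (g atil) (g a) : ℝ) * (TQ s a - Q s a) =
        C₁ * (TQ s atil - Q s atil + C₂ * dist atil a) := by
  set d := dist atil a with hdef
  have hd : 0 < d := dist_pos.mpr hne
  have hQmax : 0 ≤ Q_max := le_trans (abs_nonneg _) (hQbdd s a)
  have hga : 0 < ‖g a‖ := lt_of_lt_of_le (by positivity) hclose
  have hgm : 0 < g_max := lt_of_lt_of_le hga (hgbdd a)
  -- inner product bounds
  have h4 : (inner ℝ (g atil) (g a) : ℝ) =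
      (inner ℝ (g a) (g a) : ℝ) + (inner ℝ (g atil - g a) (g a) : ℝ) := by
    rw [← inner_add_left]; congr 1; abel
  have hinn0 : 0 ≤ (inner ℝ (g atil) (g a) : ℝ) := by
    have h1 : (inner ℝ (g a) (g a) : ℝ) = ‖g a‖ ^ 2 := real_inner_self_eq_norm_sq _
    have h2 : |(inner ℝ (g atil - g a) (g a) : ℝ)| ≤ ‖g atil - g a‖ * ‖g a‖ :=
      abs_real_inner_le_norm _ _
    have h3 : ‖g atil - g a‖ * ‖g a‖ ≤ (K_g * d) * ‖g a‖ :=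
      mul_le_mul_of_nonneg_right (hg atil a) (norm_nonneg _)
    have h5 := neg_le_of_abs_le (h2.trans h3)
    rw [h4, h1]
    nlinarith [norm_nonneg (g a)]
  have hinn1 : (inner ℝ (g atil) (g a) : ℝ) ≤ g_max ^ 2 := by
    have h6 : (inner ℝ (g atil) (g a) : ℝ) ≤ ‖g atil‖ * ‖g a‖ := real_inner_le_norm _ _
    have := hgbdd atil; have := hgbdd a
    nlinarith [norm_nonneg (g atil), norm_nonneg (g a)]
  refine ⟨α * (inner ℝ (g atil) (g a) : ℝ),
    ((TQ s a - Q s a) - (TQ s atil - Q s atil)) / d, ⟨?_, ?_⟩, ?_, ?_⟩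
  · positivity
  · calc α * (inner ℝ (g atil) (g a) : ℝ) ≤ (1 / g_max ^ 2) * g_max ^ 2 :=
        mul_le_mul hα1 hinn1 hinn0 (by positivity)
      _ = 1 := by field_simp
  · -- bound on C₂
    set M : S → ℝ := fun s' => (u s').sup' (hu s') (fun a' => Q s' a') with hM
    have hMb : ∀ s', |M s'| ≤ Q_max := by
      intro s'
      obtain ⟨b, hb, hbe⟩ := Finset.exists_mem_eq_sup' (hu s') (fun a' => Q s' a')
      rw [hM]; simp only; rw [hbe]; exact hQbdd s' b
    have hsum : |∑ s' : S, (P s a s' - P s atil s') * M s'| ≤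
        K_P * d * (Fintype.card S : ℝ) * Q_max := by
      calc |∑ s' : S, (P s a s' - P s atil s') * M s'|
          ≤ ∑ s' : S, |(P s a s' - P s atil s') * M s'| := Finset.abs_sum_le_sum_abs _ _
        _ ≤ ∑ s' : S, K_P * d * Q_max := by
            refine Finset.sum_le_sum fun s' _ => ?_
            rw [abs_mul]
            have hPd : |P s a s' - P s atil s'| ≤ K_P * d := by
              rw [abs_sub_comm]; exact hP s s' atil a
            have hKd : 0 ≤ K_P * d := le_trans (abs_nonneg _) hPd
            exact mul_le_mul hPd (hMb s') (abs_nonneg _) hKd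
        _ = K_P * d * (Fintype.card S : ℝ) * Q_max := by
            rw [Finset.sum_const, Finset.card_univ]; ring
    have hdiff : |(TQ s a - Q s a) - (TQ s atil - Q s atil)| ≤
        (K_Q + K_R + γ * K_P * (Fintype.card S : ℝ) * Q_max) * d := by
      have hexp : (TQ s a - Q s a) - (TQ s atil - Q s atil) =
          (R s a - R s atil) + γ * (∑ s' : S, (P s a s' - P s atil s') * M s')
            - (Q s a - Q s atil) := by
        have hsplit : γ * (∑ s' : S, (P s a s' - P s atil s') * M s') =
            γ * (∑ s' : S, P s a s' * M s') - γ * (∑ s' : S, P s atil s' * M s') := by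
          rw [← mul_sub, ← Finset.sum_sub_distrib]
          simp [sub_mul]
        rw [hTQ s a, hTQ s atil, hsplit]
        simp only [hM]
        ring
      rw [hexp]
      have hR' := hR s a atil
      have hQ' : |Q s a - Q s atil| ≤ K_Q * d := by
        rw [abs_sub_comm]; exact hQlip s atil a
      have hγs : |γ * (∑ s' : S, (P s a s' - P s atil s') * M s')| ≤
          γ * (K_P * d * (Fintype.card S : ℝ) * Q_max) := by
        rw [abs_mul, abs_of_nonneg hγ0]
        exact mul_le_mul_of_nonneg_left hsum hγ0
      have hRd : |R s a - R s atil| ≤ K_R * d := by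
        rw [hdef, dist_comm]; exact hR'
      rw [sub_eq_add_neg]
      refine (abs_add_three _ _ _).trans ?_
      rw [abs_neg]
      linarith
    rw [abs_div, abs_of_pos hd, div_le_iff₀ hd]
    exact hdiff
  · -- the equation
    have h : TQ s atil - Q s atil +
        ((TQ s a - Q s a) - (TQ s atil - Q s atil)) / d * d = TQ s a - Q s a := by
      rw [div_mul_cancel₀ _ hd.ne']; ring
    rw [h]
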